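/- Let Z be a Dedekind domain, P ∈ Z[T_1,…,T_k,Y_1,…,Y_n] a nonzero polynomial. Then there exists a nonzero element φ ∈ Z such that P has no fixed divisor w.r.t. (T_1,…,T_k) among the proper nonzero principal ideals of the localization Z[1/φ]. -/

import Mathlib

open MvPolynomial

lemma aux1 {Z : Type*} [CommRing Z] {k n : ℕ} (t : Fin k → Z)
    (p : MvPolynomial (Fin k ⊕ Fin n) Z) :
    aeval (Sum.elim (fun i => C (t i)) X) p
      = map (eval t) (sumToIter Z (Fin n) (Fin k) (rename Sum.swap p)) := by
  induction p using MvPolynomial.induction_on with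
  | C a => simp [sumToIter_C, algebraMap_eq]
  | add p q hp hq => simp only [map_add, hp, hq]
  | mul_X p i hp =>
    cases i <;>
      simp only [map_mul, hp, rename_X, aeval_X, Sum.elim_inl, Sum.elim_inr, Sum.swap_inl,
        Sum.swap_inr, sumToIter_Xl, sumToIter_Xr, map_X, map_C, eval_X]

lemma aux2 {Z L : Type*} [CommRing Z] [CommRing L] [Algebra Z L] {k n : ℕ} (t : Fin k → Z)
    (p : MvPolynomial (Fin k ⊕ Fin n) Z) :
    aeval (Sum.elim (fun i => C (algebraMap Z L (t i))) X) (map (algebraMap Z L) p)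
      = map (algebraMap Z L) (aeval (Sum.elim (fun i => C (t i)) X) p) := by
  induction p using MvPolynomial.induction_on with
  | C a => simp [algebraMap_eq]
  | add p q hp hq => simp only [map_add, hp, hq]
  | mul_X p i hp =>
    cases i <;>
      simp only [map_mul, map_X, hp, aeval_X, Sum.elim_inl, Sum.elim_inr, map_C]

theorem stmt_5 {Z : Type*} [CommRing Z] [IsDomain Z] [IsDedekindDomain Z] (k n : ℕ)
    (P : MvPolynomial (Fin k ⊕ Fin n) Z) (hP : P ≠ 0) :
    ∃ φ : Z, φ ≠ 0 ∧ ¬ ∃ u : Localization.Away φ, u ≠ 0 ∧ ¬ IsUnit u ∧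
      ∀ (t : Fin k → Z) (m : Fin n →₀ ℕ),
        u ∣ coeff m (aeval
          (Sum.elim (fun i => C (algebraMap Z (Localization.Away φ) (t i))) X)
          (map (algebraMap Z (Localization.Away φ)) P)
          : MvPolynomial (Fin n) (Localization.Away φ)) := by
  cases finite_or_infinite Z with
  | inl hfin =>
    -- Z is a finite domain, hence a field; take φ = 1
    have hfield : IsField Z := Finite.isField_of_domain Z
    refine ⟨1, one_ne_zero, ?_⟩
    rintro ⟨u, hu0, hu, -⟩
    apply hu
    obtain ⟨⟨a, s⟩, hs⟩ := IsLocalization.surj (Submonoid.powers (1 : Z)) u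
    obtain ⟨j, hj⟩ := s.2
    have hs1 : (s : Z) = 1 := by simpa using hj.symm
    have hu_eq : u = algebraMap Z (Localization.Away (1 : Z)) a := by
      rw [← hs]
      simp [hs1]
    have ha : a ≠ 0 := by
      rintro rfl
      exact hu0 (by simp [hu_eq])
    obtain ⟨b, hb⟩ := hfield.mul_inv_cancel ha
    have : IsUnit a := IsUnit.of_mul_eq_one b hb
    rw [hu_eq]
    exact this.map _
  | inr hinf =>
    -- view P with Y outermost
    set P₂ : MvPolynomial (Fin n) (MvPolynomial (Fin k) Z) :=
      sumToIter Z (Fin n) (Fin k) (rename Sum.swap P) with hP₂def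
    have hP₂ : P₂ ≠ 0 := by
      intro h
      apply hP
      have h1 : rename (Sum.swap : Fin k ⊕ Fin n → Fin n ⊕ Fin k) P = 0 := by
        have hco : ∀ q : MvPolynomial (Fin n ⊕ Fin k) Z,
            sumRingEquiv Z (Fin n) (Fin k) q = sumToIter Z (Fin n) (Fin k) q := fun q => by
            induction q using MvPolynomial.induction_on with
            | C a => simp [sumToIter_C, sumRingEquiv_C]
            | add p q hp hq => simp only [map_add, hp, hq]
            | mul_X p i hp =>
              cases i <;> simp [map_mul, hp, sumRingEquiv_X_inl, sumRingEquiv_X_inr,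
                sumToIter_Xl, sumToIter_Xr]
        apply (sumRingEquiv Z (Fin n) (Fin k)).injective
        rw [hco, ← hP₂def, h, map_zero]
      have hinj := rename_injective (R := Z)
        (Sum.swap : Fin k ⊕ Fin n → Fin n ⊕ Fin k) Sum.swap_leftInverse.injective
      exact hinj (by rw [h1, map_zero])
    obtain ⟨m, hm⟩ : ∃ m, coeff m P₂ ≠ 0 := by
      by_contra h
      push_neg at h
      exact hP₂ (MvPolynomial.ext _ _ fun m => by simp [h m])
    -- find t with (coeff m P₂).eval t ≠ 0
    obtain ⟨t, ht⟩ : ∃ t : Fin k → Z, eval t (coeff m P₂) ≠ 0 := by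
      by_contra h
      push_neg at h
      exact hm (MvPolynomial.funext fun x => by simp [h x])
    set φ := eval t (coeff m P₂) with hφdef
    refine ⟨φ, ht, ?_⟩
    rintro ⟨u, hu0, hu, hdvd⟩
    apply hu
    have key := hdvd t m
    rw [aux2, coeff_map, aux1 (n := n) t P, ← hP₂def, coeff_map] at key
    exact isUnit_of_dvd_unit key (IsLocalization.Away.algebraMap_isUnit φ)
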